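/- If f, g, h are rational numbers and x is a rational root of the cubic equation x³ - f²x² + g²x - h² = 0, then x is expressible as a sum of two squares of rational numbers. -/
import Mathlib

theorem root_sum_two_squares (f g h x : ℚ)
    (hx : x ^ 3 - f ^ 2 * x ^ 2 + g ^ 2 * x - h ^ 2 = 0) :
    ∃ p q : ℚ, x = p ^ 2 + q ^ 2 := by
  by_cases hd : x ^ 2 + g ^ 2 = 0
  · have hx0 : x = 0 := by nlinarith [sq_nonneg x, sq_nonneg g]
    exact ⟨0, 0, by simp [hx0]⟩
  · refine ⟨(f * x * x + h * g) / (x ^ 2 + g ^ 2),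
      (f * x * g - h * x) / (x ^ 2 + g ^ 2), ?_⟩
    field_simp
    ring_nf
    nlinarith [hx, sq_nonneg x, sq_nonneg g]
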